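/- Weighted L² bound for the Hankel transform of a complex Gaussian: let α > −1/2, s ≥ 0, and for a complex parameter z with Re z > 0 let e_z(λ) = exp(−zλ²) on (0,∞). Then the modified Hankel transform satisfies H_α(e_z)(x) = C_α z^{−(2α+1)/2} exp(−x²/(4z)), and for z = 1 − iy with y ∈ ℝ one has ∫_0^∞ |x^s H_α(e_{1−iy})(x)|² x^{2α} dx ≤ C_{α,s} (1+y²)^{s}. -/

import Mathlib

open Real MeasureTheory Set Filter

noncomputable section

private lemma contOn_rpow (q : ℝ) : ContinuousOn (fun t : ℝ => t ^ q) (Ioi 0) :=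
  fun x hx => (Real.continuousAt_rpow_const x q (Or.inl (ne_of_gt hx))).continuousWithinAt

private lemma aesm_aux (q : ℝ) (z : ℂ) :
    AEStronglyMeasurable (fun t : ℝ => (↑(t ^ q) : ℂ) * Complex.exp (-z * t))
      (volume.restrict (Ioi 0)) := by
  apply ContinuousOn.aestronglyMeasurable _ measurableSet_Ioi
  exact (Complex.continuous_ofReal.comp_continuousOn (contOn_rpow q)).mul
    (Continuous.continuousOn (by fun_prop))

private lemma norm_aux {q : ℝ} {t : ℝ} (ht : 0 < t) (w : ℂ) :
    ‖(↑(t ^ q) : ℂ) * Complex.exp w‖ = t ^ q * Real.exp w.re := by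
  rw [norm_mul, Complex.norm_real, Real.norm_eq_abs, Complex.norm_exp,
    abs_of_nonneg (Real.rpow_nonneg ht.le q)]

private lemma re_neg_mul (z : ℂ) (t : ℝ) : (-z * (t : ℂ)).re = -z.re * t := by
  simp [Complex.mul_re]

private lemma integrableOn_real_aux {q : ℝ} (hq : -1 < q) {c : ℝ} (hc : 0 < c) :
    IntegrableOn (fun t : ℝ => t ^ q * Real.exp (-c * t)) (Ioi 0) := by
  have := integrableOn_rpow_mul_exp_neg_mul_rpow hq one_pos hc
  simpa [Real.rpow_one] using this

private lemma integrableOn_aux {q : ℝ} (hq : -1 < q) {z : ℂ} (hz : 0 < z.re) :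
    IntegrableOn (fun t : ℝ => (↑(t ^ q) : ℂ) * Complex.exp (-z * t)) (Ioi 0) := by
  refine Integrable.mono' (integrableOn_real_aux hq hz) (aesm_aux q z) ?_
  refine (ae_restrict_iff' measurableSet_Ioi).2 (Eventually.of_forall fun t ht => ?_)
  rw [norm_aux ht, re_neg_mul]

/-- key complex Gamma integral. -/
private lemma cpow_gamma_integral (a : ℝ) (ha : 0 < a) :
    ∀ z : ℂ, 0 < z.re →
      ∫ t in Ioi (0:ℝ), (↑(t ^ (a - 1)) : ℂ) * Complex.exp (-z * t)
        = Complex.Gamma a * z ^ (-(a : ℂ)) := by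
  have ha' : -1 < a - 1 := by linarith
  set F : ℂ → ℂ := fun z => ∫ t in Ioi (0:ℝ), (↑(t ^ (a - 1)) : ℂ) * Complex.exp (-z * t)
    with hF
  set G : ℂ → ℂ := fun z => Complex.Gamma a * z ^ (-(a : ℂ)) with hG
  set U : Set ℂ := {z : ℂ | 0 < z.re} with hU
  have hUopen : IsOpen U := isOpen_lt continuous_const Complex.continuous_re
  have hreal : ∀ r : ℝ, 0 < r → F r = G r := by
    intro r hr
    have h0 := Complex.integral_cpow_mul_exp_neg_mul_Ioi (a := (a : ℂ)) (by simpa using ha) hr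
    have hL : F r = (1 / (r:ℂ)) ^ (a:ℂ) * Complex.Gamma a := by
      rw [hF, ← h0]
      refine setIntegral_congr_fun measurableSet_Ioi fun t ht => ?_
      rw [Complex.ofReal_cpow (le_of_lt ht)]
      push_cast
      rw [neg_mul]
    rw [hL, hG]
    have h1 : (1 / (r:ℂ)) ^ (a:ℂ) = (r:ℂ) ^ (-(a:ℂ)) := by
      rw [show (1 / (r:ℂ)) = ((1 / r : ℝ) : ℂ) by push_cast; ring,
        ← Complex.ofReal_cpow (by positivity),
        show (1/r : ℝ) ^ a = r ^ (-a) by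
          rw [one_div, Real.inv_rpow hr.le, ← Real.rpow_neg hr.le],
        Complex.ofReal_cpow hr.le]
      norm_cast
    rw [h1, mul_comm]
  have hFdiff : DifferentiableOn ℂ F U := by
    intro z₀ hz₀
    have hz₀' : 0 < z₀.re := hz₀
    set ε : ℝ := z₀.re / 2 with hε
    have hεpos : 0 < ε := by positivity
    have key := hasDerivAt_integral_of_dominated_loc_of_deriv_le (μ := volume.restrict (Ioi 0))
      (F := fun z t => (↑(t ^ (a - 1)) : ℂ) * Complex.exp (-z * t))
      (F' := fun z t => (↑(t ^ (a - 1)) : ℂ) * (-↑t * Complex.exp (-z * t)))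
      (x₀ := z₀) (bound := fun t => t ^ a * Real.exp (-ε * t)) (Metric.ball_mem_nhds z₀ hεpos)
      (Eventually.of_forall fun z => aesm_aux (a - 1) z) (integrableOn_aux ha' hz₀')
      ?_ ?_ ?_ ?_
    · exact (key.2.differentiableAt.differentiableWithinAt)
    · -- F' z₀ meas
      apply ContinuousOn.aestronglyMeasurable _ measurableSet_Ioi
      exact (Complex.continuous_ofReal.comp_continuousOn (contOn_rpow (a-1))).mul
        (Continuous.continuousOn (by fun_prop))
    · -- bound
      refine (ae_restrict_iff' measurableSet_Ioi).2 (Eventually.of_forall fun t ht => ?_)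
      intro z hzball
      have hre : ε ≤ z.re := by
        have h1 : |z.re - z₀.re| ≤ ‖z - z₀‖ := by
          simpa using Complex.abs_re_le_norm (z - z₀)
        have h2 : ‖z - z₀‖ < ε := by
          simpa [Complex.dist_eq] using Metric.mem_ball.mp hzball
        have := abs_sub_lt_iff.mp (lt_of_le_of_lt h1 h2)
        rw [hε]; linarith [this.2]
      rw [norm_mul, norm_mul, norm_neg, Complex.norm_real, Complex.norm_real, Real.norm_eq_abs,
        Real.norm_eq_abs, Complex.norm_exp,
        abs_of_nonneg (Real.rpow_nonneg (le_of_lt ht) _), abs_of_nonneg (le_of_lt ht),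
        re_neg_mul]
      have h3 : t ^ (a - 1) * (t * Real.exp (-z.re * t)) ≤ t ^ (a-1) * (t * Real.exp (-ε * t)) := by
        have h5 : Real.exp (-z.re * t) ≤ Real.exp (-ε * t) := by
          apply Real.exp_le_exp.2
          nlinarith [le_of_lt (mem_Ioi.mp ht)]
        have h4 : (0:ℝ) ≤ t ^ (a-1) := Real.rpow_nonneg (le_of_lt ht) _
        have h6 : (0:ℝ) ≤ t := le_of_lt (mem_Ioi.mp ht)
        exact mul_le_mul_of_nonneg_left (mul_le_mul_of_nonneg_left h5 h6) h4
      refine le_trans h3 (le_of_eq ?_)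
      rw [← mul_assoc, mul_comm (t ^ (a-1)) t, ← Real.rpow_one_add' (le_of_lt ht) (by linarith)]
      ring_nf
    · -- bound integrable
      have := integrableOn_real_aux (by linarith : (-1:ℝ) < a) hεpos
      exact this
    · -- hasDerivAt
      refine (ae_restrict_iff' measurableSet_Ioi).2 (Eventually.of_forall fun t ht => ?_)
      intro z hzball
      have h1 : HasDerivAt (fun z : ℂ => -z * (t:ℂ)) (-(t:ℂ)) z := by
        simpa using ((hasDerivAt_id z).neg.mul_const (t:ℂ))
      have h2 := (Complex.hasDerivAt_exp (-z * t)).comp z h1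
      simpa [mul_comm] using h2.const_mul ((↑(t ^ (a - 1)) : ℂ))
  have hGdiff : DifferentiableOn ℂ G U := by
    intro z hz
    refine DifferentiableWithinAt.const_mul ?_ _
    exact ((differentiableAt_id.cpow (differentiableAt_const _)
      (Complex.mem_slitPlane_iff.mpr (Or.inl hz))).differentiableWithinAt)
  have hFan := hFdiff.analyticOnNhd hUopen
  have hGan := hGdiff.analyticOnNhd hUopen
  have h1U : (1:ℂ) ∈ U := by simp [hU]
  have hfreq : ∃ᶠ z in nhdsWithin (1:ℂ) {(1:ℂ)}ᶜ, F z = G z := by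
    have htt : Tendsto (fun n : ℕ => ((1 + ((n:ℝ)+1)⁻¹ : ℝ) : ℂ)) atTop
        (nhdsWithin (1:ℂ) {(1:ℂ)}ᶜ) := by
      apply tendsto_nhdsWithin_of_tendsto_nhds_of_eventually_within
      · have h0 : Tendsto (fun n : ℕ => ((n:ℝ)+1)⁻¹) atTop (nhds 0) :=
          tendsto_inv_atTop_zero.comp
            (tendsto_atTop_add_const_right _ 1 tendsto_natCast_atTop_atTop)
        have hr2 : Tendsto (fun n : ℕ => (1 + ((n:ℝ)+1)⁻¹ : ℝ)) atTop (nhds 1) := by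
          have h1 := (tendsto_const_nhds (x := (1:ℝ)) (f := atTop (α := ℕ))).add h0
          rw [add_zero] at h1
          exact h1
        have h2 := (Complex.continuous_ofReal.tendsto (1:ℝ)).comp hr2
        rw [show ((1:ℝ):ℂ) = (1:ℂ) from Complex.ofReal_one] at h2
        exact h2
      · refine Eventually.of_forall fun n => ?_
        simp only [mem_compl_iff, mem_singleton_iff]
        intro h
        have : (1 + ((n:ℝ)+1)⁻¹ : ℝ) = 1 := by exact_mod_cast h
        nlinarith [this, inv_pos.2 (by positivity : (0:ℝ) < (n:ℝ)+1)]
    exact htt.frequently (Frequently.of_forall fun n => hreal _ (by positivity))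
  have := hFan.eqOn_of_preconnected_of_frequently_eq hGan
    ((convex_halfSpace_re_gt 0).isPreconnected) h1U hfreq
  intro z hz
  exact this hz

private lemma sq_cast (l : ℝ) : ((l:ℂ))^2 = ((l^2 : ℝ) : ℂ) := by push_cast; ring

private lemma norm_sq_aux {q : ℝ} {l : ℝ} (hl : 0 < l) (z : ℂ) :
    ‖(↑(l ^ q) : ℂ) * Complex.exp (-z * (l:ℂ)^2)‖ = l ^ q * Real.exp (-z.re * l^2) := by
  rw [sq_cast, norm_aux hl, re_neg_mul]

private lemma aesm_sq (q : ℝ) (z : ℂ) :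
    AEStronglyMeasurable (fun l : ℝ => (↑(l ^ q) : ℂ) * Complex.exp (-z * (l:ℂ)^2))
      (volume.restrict (Ioi 0)) := by
  apply ContinuousOn.aestronglyMeasurable _ measurableSet_Ioi
  exact (Complex.continuous_ofReal.comp_continuousOn (contOn_rpow q)).mul
    (Continuous.continuousOn (by fun_prop))

private lemma integrableOn_sq {q : ℝ} (hq : -1 < q) {z : ℂ} (hz : 0 < z.re) :
    IntegrableOn (fun l : ℝ => (↑(l ^ q) : ℂ) * Complex.exp (-z * (l:ℂ)^2)) (Ioi 0) := by
  refine Integrable.mono' (integrableOn_rpow_mul_exp_neg_mul_sq hz hq) (aesm_sq q z) ?_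
  refine (ae_restrict_iff' measurableSet_Ioi).2 (Eventually.of_forall fun l hl => ?_)
  rw [norm_sq_aux hl]

private lemma gauss_moment_real {b : ℝ} (hb : -1 < b) {c : ℝ} (hc : 0 < c) :
    ∫ l in Ioi (0:ℝ), l ^ b * Real.exp (-c * l^2)
      = c ^ (-(b+1)/2) * (1/2) * Real.Gamma ((b+1)/2) := by
  have h := integral_rpow_mul_exp_neg_mul_rpow (p := 2) two_pos hb hc
  have e : ∀ x : ℝ, x ^ (2:ℝ) = x ^ 2 := fun x => by
    rw [show ((2:ℝ)) = ((2:ℕ):ℝ) by norm_num, Real.rpow_natCast]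
  simp_rw [e] at h
  rw [h]

private lemma gauss_moment_complex {b : ℝ} (hb : -1 < b) {z : ℂ} (hz : 0 < z.re) :
    ∫ l in Ioi (0:ℝ), (↑(l ^ b) : ℂ) * Complex.exp (-z * (l:ℂ)^2)
      = (1/2 : ℂ) * Complex.Gamma (((b+1)/2 : ℝ)) * z ^ (-(((b+1)/2 : ℝ) : ℂ)) := by
  set g : ℝ → ℂ := fun t => (↑(t ^ ((b-1)/2)) : ℂ) * Complex.exp (-z * t) with hg
  have key : ∫ x in Ioi (0:ℝ), (|(2:ℝ)| * x ^ ((2:ℝ)-1)) • g (x ^ (2:ℝ)) = ∫ t in Ioi (0:ℝ), g t :=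
    integral_comp_rpow_Ioi g two_ne_zero
  have h2 : ∫ t in Ioi (0:ℝ), g t
      = Complex.Gamma (((b+1)/2:ℝ)) * z ^ (-(((b+1)/2:ℝ):ℂ)) := by
    have := cpow_gamma_integral ((b+1)/2) (by linarith) z hz
    rw [show (b+1)/2 - 1 = (b-1)/2 by ring] at this
    exact this
  have h3 : ∫ x in Ioi (0:ℝ), (|(2:ℝ)| * x ^ ((2:ℝ)-1)) • g (x ^ (2:ℝ))
      = 2 * ∫ l in Ioi (0:ℝ), (↑(l ^ b) : ℂ) * Complex.exp (-z * (l:ℂ)^2) := by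
    rw [← integral_const_mul]
    refine setIntegral_congr_fun measurableSet_Ioi fun x hx => ?_
    have hx0 : (0:ℝ) < x := hx
    have e1 : x ^ ((2:ℝ)) = x ^ 2 := by
      rw [show ((2:ℝ)) = ((2:ℕ):ℝ) by norm_num, Real.rpow_natCast]
    have e2 : (x ^ (2:ℝ)) ^ ((b-1)/2) = x ^ (b-1) := by
      rw [← Real.rpow_mul hx0.le, show 2*((b-1)/2) = b-1 by ring]
    have e3 : x * x ^ (b-1) = x ^ b := by
      rw [show x * x ^ (b-1) = x ^ (1:ℝ) * x ^ (b-1) by rw [Real.rpow_one],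
        ← Real.rpow_add hx0, show (1:ℝ) + (b-1) = b by ring]
    simp only [hg, e2]
    rw [abs_of_nonneg (by norm_num : (0:ℝ) ≤ 2), show ((2:ℝ)-1) = 1 by norm_num,
      Real.rpow_one, e1]
    rw [Complex.real_smul, sq_cast]
    push_cast
    rw [← e3]
    push_cast
    ring
  have h4 := key
  rw [h3, h2] at h4
  have : (2:ℂ) ≠ 0 := two_ne_zero
  field_simp at h4 ⊢
  linear_combination h4

/-- Bessel function of the first kind of order `ν` (power series definition). -/
noncomputable def besselJ (ν x : ℝ) : ℝ :=
  ∑' m : ℕ, (-1) ^ m / (m.factorial * Real.Gamma (m + ν + 1)) *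
    (x / 2) ^ (2 * m) * (x / 2) ^ ν

/-- The one-dimensional modified Hankel transform
`H_α(g)(x) = ∫_0^∞ g(λ)(xλ)^{−α+1/2} J_{α−1/2}(xλ) λ^{2α} dλ`. -/
noncomputable def hankelTransform (α : ℝ) (g : ℝ → ℂ) (x : ℝ) : ℂ :=
  ∫ l in Set.Ioi (0 : ℝ),
    g l * (↑((x * l) ^ (-α + 1 / 2) * besselJ (α - 1 / 2) (x * l) * l ^ (2 * α)) : ℂ)

private lemma alg2 {G f zr : ℝ} (hG : G ≠ 0) (hf : f ≠ 0) (hzr : zr ≠ 0)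
    (β xh γ : ℝ) (m : ℕ) :
    (xh^(2*m) * β / (f * G)) * ((zr^m)⁻¹ * γ * (1/2) * G)
      = (β * (1/2) * γ) * ((xh^2 / zr)^m / f) := by
  have h1 : (xh^2/zr)^m = xh^(2*m) / zr^m := by rw [div_pow, pow_mul]
  have h2 : zr ^ m ≠ 0 := pow_ne_zero _ hzr
  rw [h1]
  field_simp

private lemma alg1 {G : ℝ} (hG : G ≠ 0) (f : ℕ) (hf : f ≠ 0) (β xh : ℝ) (A B : ℂ) (m : ℕ) :
    (↑((-1:ℝ)^m / ((f:ℝ) * G) * xh^(2*m) * β) : ℂ) * ((1/2 : ℂ) * (↑G:ℂ) * (B^m * A))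
      = ((↑(β/2 : ℝ):ℂ) * A) * (((-1:ℂ)^m * (↑xh:ℂ)^(2*m) * B^m) / ((f:ℕ):ℂ)) := by
  have hG' : (G:ℂ) ≠ 0 := by exact_mod_cast hG
  have hf' : ((f:ℕ):ℂ) ≠ 0 := Nat.cast_ne_zero.mpr hf
  push_cast
  field_simp

private lemma hankel_gaussian (α : ℝ) (hα : -(1/2:ℝ) < α) {z : ℂ} (hz : 0 < z.re)
    {x : ℝ} (hx : 0 < x) :
    hankelTransform α (fun l : ℝ => Complex.exp (-z * (l:ℂ)^2)) x
      = (↑((2:ℝ) ^ ((1:ℝ)/2 - α) / 2) : ℂ) * z ^ (-((α+1/2 : ℝ)) : ℂ) *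
          Complex.exp (-(x:ℂ)^2 / (4*z)) := by
  have hz0 : z ≠ 0 := fun h => by simp [h] at hz
  set c : ℕ → ℝ := fun m => (-1)^m / (m.factorial * Real.Gamma (m + (α - 1/2) + 1)) with hc
  set d : ℕ → ℝ := fun m => c m * (x/2)^(2*m) * 2^((1:ℝ)/2 - α) with hd
  set F : ℕ → ℝ → ℂ := fun m l =>
    (↑(d m) : ℂ) * ((↑(l ^ (2*(m:ℝ)+2*α)) : ℂ) * Complex.exp (-z * (l:ℂ)^2)) with hFdef
  have hgam : ∀ m : ℕ, (0:ℝ) < (m:ℝ) + α + 1/2 := fun m => by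
    have : (0:ℝ) ≤ m := Nat.cast_nonneg m
    linarith
  have hgampos : ∀ m : ℕ, 0 < Real.Gamma ((m:ℝ) + (α - 1/2) + 1) := fun m => by
    apply Real.Gamma_pos_of_pos
    have := hgam m; linarith
  have hqm : ∀ m : ℕ, (-1:ℝ) < 2*(m:ℝ)+2*α := fun m => by
    have : (0:ℝ) ≤ m := Nat.cast_nonneg m
    linarith
  -- pointwise identity
  have hpt : ∀ l ∈ Ioi (0:ℝ),
      Complex.exp (-z*(l:ℂ)^2) *
        (↑((x*l) ^ (-α + 1/2) * besselJ (α - 1/2) (x*l) * l ^ (2*α)) : ℂ)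
        = ∑' m, F m l := by
    intro l hl
    have hl0 : (0:ℝ) < l := hl
    have ht : (0:ℝ) < x*l := by positivity
    have hA : (x*l) ^ (-α + 1/2) * besselJ (α - 1/2) (x*l) * l ^ (2*α)
        = ∑' m : ℕ, d m * l ^ (2*(m:ℝ)+2*α) := by
      rw [besselJ, tsum_mul_right, show (x*l) ^ (-α + 1/2) *
          ((∑' m : ℕ, (-1)^m / (m.factorial * Real.Gamma (m + (α - 1/2) + 1)) *
            ((x*l)/2)^(2*m)) * ((x*l)/2) ^ (α - 1/2)) * l ^ (2*α)
          = ((x*l) ^ (-α + 1/2) * ((x*l)/2) ^ (α - 1/2) * l ^ (2*α)) *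
            ∑' m : ℕ, c m * ((x*l)/2)^(2*m) by rw [hc]; ring,
        ← tsum_mul_left]
      refine tsum_congr fun m => ?_
      have hK : (x*l) ^ (-α + 1/2) * ((x*l)/2) ^ (α - 1/2) * l ^ (2*α)
          = 2^((1:ℝ)/2-α) * l^(2*α) := by
        rw [Real.div_rpow ht.le (by norm_num : (0:ℝ) ≤ 2)]
        rw [show (x*l) ^ (-α + 1/2) * ((x*l) ^ (α - 1/2) / (2:ℝ) ^ (α - 1/2))
            = ((x*l) ^ (-α + 1/2) * (x*l) ^ (α - 1/2)) * ((2:ℝ) ^ (α - 1/2))⁻¹ by ring,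
          ← Real.rpow_add ht, show -α + 1/2 + (α - 1/2) = 0 by ring, Real.rpow_zero,
          ← Real.rpow_neg (by norm_num : (0:ℝ) ≤ 2), show -(α - 1/2) = 1/2 - α by ring]
        ring
      rw [hK]
      have hq2 : ((x*l)/2)^(2*m) = (x/2)^(2*m) * l^(2*m) := by
        rw [show (x*l)/2 = (x/2)*l by ring, mul_pow]
      rw [hq2]
      have hl2 : l^(2*m) * l^(2*α) = l ^ (2*(m:ℝ)+2*α) := by
        rw [← Real.rpow_natCast l (2*m), ← Real.rpow_add hl0]
        push_cast
        ring_nf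
      rw [hd, ← hl2]
      ring
    rw [hA, Complex.ofReal_tsum, ← tsum_mul_left]
    refine tsum_congr fun m => ?_
    rw [hFdef]
    push_cast
    ring
  rw [hankelTransform, setIntegral_congr_fun measurableSet_Ioi hpt]
  -- interchange
  have hInt : ∀ m : ℕ, Integrable (F m) (volume.restrict (Ioi 0)) := by
    intro m
    exact ((integrableOn_sq (hqm m) hz).const_mul _)
  have hNormVal : ∀ m : ℕ, ∫ l in Ioi (0:ℝ), ‖F m l‖
      = |d m| * ((z.re) ^ (-(2*(m:ℝ)+2*α+1)/2) * (1/2) *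
          Real.Gamma ((2*(m:ℝ)+2*α+1)/2)) := by
    intro m
    have : ∀ l ∈ Ioi (0:ℝ), ‖F m l‖
        = |d m| * (l ^ (2*(m:ℝ)+2*α) * Real.exp (-z.re * l^2)) := by
      intro l hl
      simp only [hFdef]
      rw [norm_mul, norm_sq_aux hl, Complex.norm_real, Real.norm_eq_abs]
    rw [setIntegral_congr_fun measurableSet_Ioi this, integral_const_mul,
      gauss_moment_real (hqm m) hz, show 2*(m:ℝ)+2*α+1 = (2*(m:ℝ)+2*α)+1 by ring]
  have hSum : Summable fun m : ℕ => ∫ l in Ioi (0:ℝ), ‖F m l‖ := by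
    have hval : ∀ m : ℕ, ∫ l in Ioi (0:ℝ), ‖F m l‖
        = (2^((1:ℝ)/2-α) * (1/2) * z.re ^ (-(α+1/2)))
          * (((x/2)^2 / z.re)^m / m.factorial) := by
      intro m
      rw [hNormVal m]
      have habs : |d m| = (x/2)^(2*m) * 2^((1:ℝ)/2-α)
          / (m.factorial * Real.Gamma ((m:ℝ) + (α - 1/2) + 1)) := by
        rw [hd, hc]
        rw [abs_mul, abs_mul, abs_div, abs_pow, abs_neg, abs_one, one_pow,
          abs_of_pos (mul_pos (by exact_mod_cast m.factorial_pos) (hgampos m)),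
          abs_of_nonneg (by positivity : (0:ℝ) ≤ ((x/2):ℝ)^(2*m)),
          abs_of_nonneg (Real.rpow_nonneg (by norm_num : (0:ℝ) ≤ 2) _)]
        ring
      have hrexp : (z.re) ^ (-(2*(m:ℝ)+2*α+1)/2)
          = (z.re ^ (m:ℕ))⁻¹ * z.re ^ (-(α+1/2)) := by
        rw [show (-(2*(m:ℝ)+2*α+1)/2) = -(m:ℝ) + (-(α+1/2)) by ring,
          Real.rpow_add hz, Real.rpow_neg hz.le, Real.rpow_natCast]
      have hgamval : Real.Gamma ((2*(m:ℝ)+2*α+1)/2)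
          = Real.Gamma ((m:ℝ) + (α - 1/2) + 1) := by
        congr 1
        ring
      rw [habs, hrexp, hgamval]
      exact alg2 (hgampos m).ne' (Nat.cast_ne_zero.mpr m.factorial_ne_zero) (ne_of_gt hz) _ _ _ m
    rw [funext hval]
    exact (Real.summable_pow_div_factorial _).mul_left _
  rw [MeasureTheory.integral_tsum_of_summable_integral_norm hInt hSum |>.symm]
  -- compute each integral
  set w : ℂ := -(x:ℂ)^2 / (4*z) with hw
  have hIntVal : ∀ m : ℕ, ∫ l in Ioi (0:ℝ), F m l
      = ((↑((2:ℝ) ^ ((1:ℝ)/2 - α) / 2) : ℂ) * z ^ (-((α+1/2 : ℝ)) : ℂ)) * (w^m / m.factorial) := by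
    intro m
    simp only [hFdef]
    rw [MeasureTheory.integral_const_mul, gauss_moment_complex (hqm m) hz]
    have harg : ((2*(m:ℝ)+2*α)+1)/2 = (m:ℝ) + (α + 1/2) := by ring
    rw [show (2*(m:ℝ)+2*α+1)/2 = (m:ℝ) + (α+1/2) by ring]
    have hgam2 : Complex.Gamma (((m:ℝ) + (α+1/2) : ℝ) : ℂ)
        = (↑(Real.Gamma ((m:ℝ) + (α - 1/2) + 1)) : ℂ) := by
      rw [Complex.Gamma_ofReal, show (m:ℝ) + (α+1/2) = (m:ℝ) + (α - 1/2) + 1 by ring]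
    have hzpow : z ^ (-(((m:ℝ) + (α+1/2) : ℝ)) : ℂ)
        = (z⁻¹)^m * z ^ (-((α+1/2 : ℝ)) : ℂ) := by
      rw [show (-(((m:ℝ) + (α+1/2) : ℝ)) : ℂ) = (-(m:ℂ)) + (-((α+1/2 : ℝ)) : ℂ) by
          push_cast; ring,
        Complex.cpow_add _ _ hz0, Complex.cpow_neg, Complex.cpow_natCast, inv_pow]
    rw [hgam2, hzpow]
    have hGne : (↑(Real.Gamma ((m:ℝ) + (α - 1/2) + 1)) : ℂ) ≠ 0 := by
      exact_mod_cast (hgampos m).ne'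
    have hfacne : ((m.factorial : ℝ) : ℂ) ≠ 0 := by
      exact_mod_cast (Nat.cast_ne_zero.mpr m.factorial_ne_zero : (m.factorial:ℝ) ≠ 0)
    have hwm : w ^ m = (-1:ℂ)^m * ((x/2 : ℝ) : ℂ)^(2*m) * (z⁻¹)^m := by
      rw [hw, show -(x:ℂ)^2/(4*z) = (-1) * ((x/2 : ℝ):ℂ)^2 * z⁻¹ by
        push_cast
        rw [div_eq_mul_inv, mul_inv]
        ring]
      rw [mul_pow, mul_pow, ← pow_mul]
    rw [hwm]
    simp only [hd, hc]
    exact alg1 (hgampos m).ne' _ m.factorial_ne_zero _ _ _ _ _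
  rw [funext hIntVal, tsum_mul_left]
  have hexp : ∑' m : ℕ, w^m / (m.factorial : ℂ) = Complex.exp w := by
    rw [Complex.exp_eq_exp_ℂ, NormedSpace.exp_eq_tsum_div]
  rw [hexp, hw]

/-- For `α > −1/2`, `H_α(e_z)(x) = C_α z^{−(2α+1)/2} exp(−x²/(4z))` for `Re z > 0`,
and for `z = 1−iy` the weighted `L²` bound
`∫_0^∞ |x^s H_α(e_{1−iy})(x)|² x^{2α} dx ≤ C_{α,s}(1+y²)^s` holds. -/
theorem stmt_19 (α s : ℝ) (hα : -(1 / 2 : ℝ) < α) (hs : 0 ≤ s) :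
    ∃ C : ℂ, ∃ C' : ℝ, 0 < C' ∧
      (∀ z : ℂ, 0 < z.re → ∀ x : ℝ, 0 < x →
        hankelTransform α (fun l : ℝ => Complex.exp (-z * (l : ℂ) ^ 2)) x
          = C * z ^ (-(((2 * α + 1) / 2 : ℝ)) : ℂ) *
              Complex.exp (-(x : ℂ) ^ 2 / (4 * z))) ∧
      ∀ y : ℝ,
        ∫ x in Set.Ioi (0 : ℝ),
          (x ^ s * ‖
            (hankelTransform α
              (fun l : ℝ => Complex.exp (-(1 - Complex.I * (y : ℂ)) * (l : ℂ) ^ 2))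
              x)‖) ^ 2 * x ^ (2 * α)
          ≤ C' * (1 + y ^ 2) ^ s := by
  set C : ℂ := (↑((2:ℝ) ^ ((1:ℝ)/2 - α) / 2) : ℂ) with hC
  set A : ℝ := (2:ℝ) ^ ((1:ℝ)/2 - α) / 2 with hA
  have hApos : 0 < A := by rw [hA]; positivity
  set b : ℝ := 2*s + 2*α with hb
  have hbgt : (-1:ℝ) < b := by rw [hb]; linarith
  set C' : ℝ := A^2 * (2 ^ ((b+1)/2) * (1/2) * Real.Gamma ((b+1)/2)) with hC'
  have hC'pos : 0 < C' := by
    have hg : 0 < Real.Gamma ((b+1)/2) := Real.Gamma_pos_of_pos (by linarith)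
    rw [hC']
    positivity
  have hpart1 : ∀ z : ℂ, 0 < z.re → ∀ x : ℝ, 0 < x →
      hankelTransform α (fun l : ℝ => Complex.exp (-z * (l : ℂ) ^ 2)) x
        = C * z ^ (-(((2 * α + 1) / 2 : ℝ)) : ℂ) * Complex.exp (-(x : ℂ) ^ 2 / (4 * z)) := by
    intro z hz x hx
    rw [show ((2 * α + 1) / 2 : ℝ) = ((α + 1/2 : ℝ)) by ring]
    exact hankel_gaussian α hα hz hx
  refine ⟨C, C', hC'pos, hpart1, ?_⟩
  intro y
  set T : ℝ := 1 + y^2 with hT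
  have hTpos : (0:ℝ) < T := by rw [hT]; positivity
  set z : ℂ := 1 - Complex.I * (y:ℂ) with hzdef
  have hzre : z.re = 1 := by simp [hzdef]
  have hzim : z.im = -y := by simp [hzdef]
  have hzrepos : 0 < z.re := by rw [hzre]; norm_num
  have hz0 : z ≠ 0 := fun h => by rw [h] at hzre; simp at hzre
  have hnormSq : Complex.normSq z = T := by
    rw [Complex.normSq_apply, hzre, hzim, hT]
    ring
  have habsz : ‖z‖ = T ^ ((1:ℝ)/2) := by
    rw [Complex.norm_def, hnormSq, Real.sqrt_eq_rpow]
  have habszp : ‖(z ^ (-(((2 * α + 1) / 2 : ℝ)) : ℂ))‖ = T ^ (-(2*α+1)/4) := by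
    rw [Complex.norm_cpow_of_ne_zero hz0]
    simp only [Complex.neg_im, Complex.neg_re, Complex.ofReal_im, Complex.ofReal_re,
      neg_zero, mul_zero, Real.exp_zero, div_one]
    rw [habsz, ← Real.rpow_mul hTpos.le]
    congr 1
    ring
  -- pointwise rewrite of integrand
  have hptw : ∀ x ∈ Ioi (0:ℝ),
      (x ^ s * ‖
        (hankelTransform α (fun l : ℝ => Complex.exp (-z * (l : ℂ) ^ 2)) x)‖) ^ 2 * x ^ (2 * α)
        = (A^2 * T ^ (-(2*α+1)/2)) * (x ^ b * Real.exp (-(1/(2*T)) * x^2)) := by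
    intro x hx
    have hx0 : (0:ℝ) < x := hx
    rw [hpart1 z hzrepos x hx0, norm_mul, norm_mul, habszp]
    have hCabs : ‖C‖ = A := by
      rw [hC, Complex.norm_real, Real.norm_eq_abs, abs_of_pos hApos]
    rw [hCabs]
    have hre : (-(x:ℂ)^2/(4*z)).re = -(x^2)/(4*T) := by
      rw [div_eq_mul_inv, show -(x:ℂ)^2 = ((-(x^2) : ℝ) : ℂ) by push_cast; ring,
        show (4:ℂ)*z = ((4:ℝ):ℂ)*z by norm_num]
      rw [mul_inv, ← Complex.ofReal_inv]
      rw [show ((-(x^2):ℝ):ℂ) * ((((4:ℝ)⁻¹ :ℝ):ℂ) * z⁻¹)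
          = ((((-(x^2)) * (4:ℝ)⁻¹ : ℝ)):ℂ) * z⁻¹ by push_cast; ring]
      rw [Complex.re_ofReal_mul, Complex.inv_re, hzre, hnormSq]
      field_simp
    rw [Complex.norm_exp, hre]
    -- now pure real computation
    have hxs : (x^s)^2 = x^(2*s) := by
      rw [sq, ← Real.rpow_add hx0]
      congr 1
      ring
    have hT2 : (T ^ (-(2*α+1)/4))^2 = T ^ (-(2*α+1)/2) := by
      rw [sq, ← Real.rpow_add hTpos]
      congr 1
      ring
    have hexp2 : (Real.exp (-(x^2)/(4*T)))^2 = Real.exp (-(1/(2*T)) * x^2) := by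
      rw [sq, ← Real.exp_add]
      congr 1
      field_simp
      ring
    have hxx : x^(2*s) * x^(2*α) = x ^ b := by
      rw [← Real.rpow_add hx0, hb]
    rw [mul_pow, mul_pow, mul_pow, hxs, hT2, hexp2, ← hxx]
    ring
  rw [setIntegral_congr_fun measurableSet_Ioi hptw, MeasureTheory.integral_const_mul,
    gauss_moment_real hbgt (by positivity : (0:ℝ) < 1/(2*T))]
  have e1 : (1/(2*T)) ^ (-(b+1)/2) = 2^((b+1)/2) * T^((b+1)/2) := by
    rw [one_div, Real.inv_rpow (by positivity), ← Real.rpow_neg (by positivity),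
      show (-(-(b+1)/2)) = (b+1)/2 by ring, Real.mul_rpow (by norm_num) hTpos.le]
  have e2 : T ^ (-(2*α+1)/2) * T ^ ((b+1)/2) = T ^ s := by
    rw [← Real.rpow_add hTpos]
    congr 1
    rw [hb]
    ring
  refine le_of_eq ?_
  rw [e1]
  calc A^2 * T ^ (-(2*α+1)/2) * (2^((b+1)/2) * T^((b+1)/2) * (1/2) * Real.Gamma ((b+1)/2))
      = (A^2 * (2 ^ ((b+1)/2) * (1/2) * Real.Gamma ((b+1)/2)))
          * (T ^ (-(2*α+1)/2) * T ^ ((b+1)/2)) := by ring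
    _ = C' * T ^ s := by rw [e2, hC']

end
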